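/- Let V be a finite-dimensional real vector space, K ⊆ V a closed convex cone, and L ⊆ V a linear subspace. If K ∩ L is a linear subspace of V, then the Minkowski sum K + L is closed. -/

import Mathlib

open Pointwise Filter Topology Bornology

/-- The key special case: if `K ∩ L = {0}`, then `K + L` is closed. -/
lemma aux_closed_add
    (V : Type*) [NormedAddCommGroup V] [NormedSpace ℝ V] [FiniteDimensional ℝ V]
    (K : Set V) (hKclosed : IsClosed K)
    (hKcone : ∀ (c : ℝ), 0 ≤ c → ∀ x ∈ K, c • x ∈ K)
    (L : Submodule ℝ V) (htriv : K ∩ (L : Set V) ⊆ {0}) :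
    IsClosed (K + (L : Set V)) := by
  have hLclosed : IsClosed (L : Set V) := Submodule.closed_of_finiteDimensional L
  apply IsSeqClosed.isClosed
  intro x z hx hz
  choose k hk l hl hkl using fun n => Set.mem_add.mp (hx n)
  -- a global bound on the convergent sequence `x`
  obtain ⟨C', hC'⟩ : ∃ C' : ℝ, ∀ n, ‖x n‖ ≤ C' := by
    obtain ⟨C', hC'⟩ := hz.norm.bddAbove_range
    exact ⟨C', fun n => hC' (Set.mem_range_self n)⟩
  -- the `k` sequence is bounded
  have hbdd : ∃ C : ℝ, ∀ n, ‖k n‖ ≤ C := by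
    by_contra hC
    push_neg at hC
    choose φ hφ using fun m : ℕ => hC ((m : ℝ) + 1)
    have hnorm_pos : ∀ m, (0 : ℝ) < ‖k (φ m)‖ := fun m =>
      lt_of_le_of_lt (by positivity) (hφ m)
    set u : ℕ → V := fun m => ‖k (φ m)‖⁻¹ • k (φ m) with hu
    have hu_mem : ∀ m, u m ∈ K := fun m =>
      hKcone _ (inv_nonneg.mpr (norm_nonneg _)) _ (hk (φ m))
    have hu_norm : ∀ m, ‖u m‖ = 1 := by
      intro m
      simp only [hu, norm_smul, norm_inv, norm_norm]
      exact inv_mul_cancel₀ (hnorm_pos m).ne'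
    have hu_ball : ∀ m, u m ∈ Metric.closedBall (0 : V) 1 := by
      intro m
      rw [Metric.mem_closedBall, dist_zero_right, hu_norm m]
    obtain ⟨a, -, ψ, hψ, hua⟩ :=
      tendsto_subseq_of_bounded Metric.isBounded_closedBall hu_ball
    have haK : a ∈ K :=
      hKclosed.mem_of_tendsto hua (Eventually.of_forall fun m => hu_mem (ψ m))
    have ha_norm : ‖a‖ = 1 := by
      have h1 : Tendsto (fun m => ‖u (ψ m)‖) atTop (𝓝 ‖a‖) :=
        (continuous_norm.tendsto a).comp hua
      have h2 : Tendsto (fun _ : ℕ => (1 : ℝ)) atTop (𝓝 ‖a‖) := by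
        simpa [hu_norm] using h1
      exact (tendsto_nhds_unique tendsto_const_nhds h2).symm
    -- the inverse norms tend to 0
    have hinv0 : Tendsto (fun m => ‖k (φ (ψ m))‖⁻¹) atTop (𝓝 0) := by
      have h1 : Tendsto (fun m : ℕ => ‖k (φ (ψ m))‖) atTop atTop := by
        apply tendsto_atTop_mono (fun m => ?_) tendsto_natCast_atTop_atTop
        have hle : (m : ℝ) ≤ (ψ m : ℝ) := Nat.cast_le.mpr hψ.le_apply
        calc (m : ℝ) ≤ (ψ m : ℝ) + 1 := by linarith
          _ ≤ ‖k (φ (ψ m))‖ := (hφ (ψ m)).le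
      exact h1.inv_tendsto_atTop
    have hx0 : Tendsto (fun m => ‖k (φ (ψ m))‖⁻¹ • x (φ (ψ m))) atTop (𝓝 0) :=
      hinv0.zero_smul_isBoundedUnder_le
        (isBoundedUnder_of ⟨C', fun m => hC' (φ (ψ m))⟩)
    -- the rescaled `l` sequence tends to `-a`
    have hv : Tendsto (fun m => ‖k (φ (ψ m))‖⁻¹ • l (φ (ψ m))) atTop (𝓝 (-a)) := by
      have heq : ∀ m, ‖k (φ (ψ m))‖⁻¹ • l (φ (ψ m)) =
          ‖k (φ (ψ m))‖⁻¹ • x (φ (ψ m)) - u (ψ m) := by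
        intro m
        have : l (φ (ψ m)) = x (φ (ψ m)) - k (φ (ψ m)) :=
          eq_sub_of_add_eq' (hkl (φ (ψ m)))
        rw [this, smul_sub]
      simp only [heq]
      have := hx0.sub hua
      simpa using this
    have hvL : ∀ m, ‖k (φ (ψ m))‖⁻¹ • l (φ (ψ m)) ∈ (L : Set V) := fun m =>
      L.smul_mem _ (hl (φ (ψ m)))
    have haL : -a ∈ (L : Set V) :=
      hLclosed.mem_of_tendsto hv (Eventually.of_forall hvL)
    have haL' : a ∈ (L : Set V) := by
      have := L.neg_mem haL
      simpa using this
    have : a = 0 := htriv ⟨haK, haL'⟩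
    rw [this, norm_zero] at ha_norm
    norm_num at ha_norm
  -- now extract a convergent subsequence of `k`
  obtain ⟨C, hC⟩ := hbdd
  have hk_ball : ∀ n, k n ∈ Metric.closedBall (0 : V) C := fun n => by
    rw [Metric.mem_closedBall, dist_zero_right]; exact hC n
  obtain ⟨a, -, ψ, hψ, hka⟩ :=
    tendsto_subseq_of_bounded Metric.isBounded_closedBall hk_ball
  have haK : a ∈ K :=
    hKclosed.mem_of_tendsto hka (Eventually.of_forall fun m => hk (ψ m))
  have hxψ : Tendsto (x ∘ ψ) atTop (𝓝 z) := hz.comp hψ.tendsto_atTop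
  have hlψ : Tendsto (fun m => l (ψ m)) atTop (𝓝 (z - a)) := by
    have heq : ∀ m, l (ψ m) = x (ψ m) - k (ψ m) := fun m =>
      eq_sub_of_add_eq' (hkl (ψ m))
    simp only [heq]
    exact hxψ.sub hka
  have hzaL : z - a ∈ (L : Set V) :=
    hLclosed.mem_of_tendsto hlψ (Eventually.of_forall fun m => hl (ψ m))
  exact ⟨a, haK, z - a, hzaL, add_sub_cancel a z⟩

theorem dieudonne_cone_plus_subspace_closed
    (V : Type*) [NormedAddCommGroup V] [NormedSpace ℝ V] [FiniteDimensional ℝ V]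
    (K : Set V) (hKclosed : IsClosed K) (hKconv : Convex ℝ K) (hK0 : (0 : V) ∈ K)
    (hKcone : ∀ (c : ℝ), 0 ≤ c → ∀ x ∈ K, c • x ∈ K)
    (L : Submodule ℝ V)
    (hKL : ∃ M : Submodule ℝ V, (M : Set V) = K ∩ (L : Set V)) :
    IsClosed (K + (L : Set V)) := by
  obtain ⟨M, hM⟩ := hKL
  have hMK : (M : Set V) ⊆ K := by rw [hM]; exact Set.inter_subset_left
  have hML : M ≤ L := fun v hv => by
    have : v ∈ (M : Set V) := hv
    rw [hM] at this
    exact this.2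
  -- K is closed under addition
  have hKadd : ∀ x ∈ K, ∀ y ∈ K, x + y ∈ K := by
    intro x hx y hy
    have h1 : (1 / 2 : ℝ) • x + (1 / 2 : ℝ) • y ∈ K :=
      hKconv hx hy (by norm_num) (by norm_num) (by norm_num)
    have h2 := hKcone 2 (by norm_num) _ h1
    have : (2 : ℝ) • ((1 / 2 : ℝ) • x + (1 / 2 : ℝ) • y) = x + y := by
      rw [smul_add, smul_smul, smul_smul]
      norm_num
    rwa [this] at h2
  obtain ⟨M', hM'⟩ := Submodule.exists_isCompl M
  set K' : Set V := K ∩ (M' : Set V) with hK'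
  have hK'closed : IsClosed K' :=
    hKclosed.inter (Submodule.closed_of_finiteDimensional M')
  have hK'cone : ∀ (c : ℝ), 0 ≤ c → ∀ x ∈ K', c • x ∈ K' := by
    intro c hc x hx
    exact ⟨hKcone c hc x hx.1, M'.smul_mem c hx.2⟩
  have htriv : K' ∩ (L : Set V) ⊆ {0} := by
    intro v hv
    have hvM : v ∈ (M : Set V) := by rw [hM]; exact ⟨hv.1.1, hv.2⟩
    have hvM' : v ∈ M' := hv.1.2
    have : v ∈ M ⊓ M' := ⟨hvM, hvM'⟩
    rw [hM'.inf_eq_bot] at this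
    simpa using this
  have hsum : K + (L : Set V) = K' + (L : Set V) := by
    apply Set.Subset.antisymm
    · rintro y ⟨a, ha, b, hb, rfl⟩
      obtain ⟨m, hm, p, hp, hmp⟩ :=
        Submodule.mem_sup.mp (show a ∈ M ⊔ M' by rw [hM'.sup_eq_top]; exact Submodule.mem_top)
      have hpK : p ∈ K := by
        have hnm : -m ∈ (M : Set V) := M.neg_mem hm
        have : a + -m ∈ K := hKadd a ha (-m) (hMK hnm)
        have hpeq : p = a + -m := by rw [← hmp]; abel
        rwa [hpeq]
      refine ⟨p, ⟨hpK, hp⟩, m + b, L.add_mem (hML hm) hb, ?_⟩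
      rw [← hmp]; abel
    · exact Set.add_subset_add_right Set.inter_subset_left
  rw [hsum]
  exact aux_closed_add V K' hK'closed hK'cone L htriv
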